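/- Let A be a unital K-Banach algebra with multiplication m of norm ≤ 1, and let a' ∈ A' be a continuous functional such that m'(a') lies in the image of A' ⊗̂ A' inside (A ⊗̂ A)'. Then the map (↦ a') : A → A' defined by a ↦ (x ↦ a'(xa)) is a compact (completely continuous) operator. -/

import Mathlib

/-- An abstract model of the completed (projective) tensor product `V ⊗̂ W` of normed
spaces over a nonarchimedean field `K`: a Banach space `T` together with a continuous
bilinear map `tm` of norm `≤ 1` with dense span, satisfying the universal property of
the completed projective tensor product. -/
structure BTensor (K : Type) [NontriviallyNormedField K] (V W : Type)
    [NormedAddCommGroup V] [NormedSpace K V]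
    [NormedAddCommGroup W] [NormedSpace K W] : Type 1 where
  T : Type
  [grp : NormedAddCommGroup T]
  [mod : NormedSpace K T]
  [cpl : CompleteSpace T]
  tm : V →L[K] W →L[K] T
  tm_norm : ∀ v w, ‖tm v w‖ ≤ ‖v‖ * ‖w‖
  dense_span : Dense (Submodule.span K (Set.range fun p : V × W => (tm p.1) p.2) : Set T)
  lift : ∀ (Z : Type) [NormedAddCommGroup Z] [NormedSpace K Z] [CompleteSpace Z],
      (V →L[K] W →L[K] Z) → (T →L[K] Z)
  lift_tm : ∀ (Z : Type) [NormedAddCommGroup Z] [NormedSpace K Z] [CompleteSpace Z]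
      (b : V →L[K] W →L[K] Z) (v : V) (w : W), lift Z b (tm v w) = b v w
  lift_norm : ∀ (Z : Type) [NormedAddCommGroup Z] [NormedSpace K Z] [CompleteSpace Z]
      (b : V →L[K] W →L[K] Z), ‖lift Z b‖ ≤ ‖b‖

attribute [instance] BTensor.grp BTensor.mod BTensor.cpl

/-- `K` is discretely valued: the value group of `K` is generated by a uniformizer. -/
def DiscretelyValued (K : Type) [NontriviallyNormedField K] : Prop :=
  ∃ π : K, 0 < ‖π‖ ∧ ‖π‖ < 1 ∧ ∀ x : K, x ≠ 0 → ∃ n : ℤ, ‖x‖ = ‖π‖ ^ n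

set_option maxHeartbeats 2000000 in
/-- Let `A` be a unital `K`-Banach algebra (multiplication of norm `≤ 1`)
and `a' ∈ A'` a continuous functional such that `m'(a')` lies in the image of
`A' ⊗̂ A'` inside `(A ⊗̂ A)'` (i.e. `a' ∈ A^⊙`).  Then the operator
`a ↦ (x ↦ a'(x * a)) : A → A'` is compact: it lies in the operator-norm closure of the
finite-rank operators. Here `tD` models `A' ⊗̂ A'` and `P` is the canonical isometric
pairing `A' ⊗̂ A' → (A ⊗̂ A)'` (viewed as continuous bilinear forms). -/
theorem left_translate_compact
    (K : Type) [NontriviallyNormedField K] [CompleteSpace K] [IsUltrametricDist K]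
    (hdv : DiscretelyValued K)
    (A : Type) [NormedRing A] [NormedAlgebra K A] [CompleteSpace A] [IsUltrametricDist A]
    (tD : BTensor K (A →L[K] K) (A →L[K] K))
    (P : tD.T →L[K] A →L[K] A →L[K] K)
    (hP : ∀ (α β : A →L[K] K) (x y : A), P (tD.tm α β) x y = α x * β y)
    (a' : A →L[K] K)
    (hrep : ∃ z : tD.T, ∀ x y : A, P z x y = a' (x * y)) :
    ((ContinuousLinearMap.compL K A A K) a').comp (ContinuousLinearMap.mul K A).flip ∈
      closure {g : A →L[K] A →L[K] K | FiniteDimensional K (LinearMap.range (g : A →ₗ[K] A →L[K] K))} := by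
  classical
  obtain ⟨z, hz⟩ := hrep
  set Q : tD.T →L[K] (A →L[K] A →L[K] K) :=
    ((ContinuousLinearMap.flipₗᵢ K A A K).toContinuousLinearEquiv :
        (A →L[K] A →L[K] K) ≃L[K] (A →L[K] A →L[K] K)).toContinuousLinearMap.comp P with hQ
  have hQapp : ∀ w : tD.T, Q w = (P w).flip := fun w => rfl
  have heq : ((ContinuousLinearMap.compL K A A K) a').comp
      (ContinuousLinearMap.mul K A).flip = Q z := by
    ext a x
    simp [hQapp, hz x a]
  rw [heq]
  have hzcl : z ∈ closure
      (Submodule.span K (Set.range fun p : (A →L[K] K) × (A →L[K] K) => tD.tm p.1 p.2) :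
        Set tD.T) := tD.dense_span z
  have h1 : Q z ∈ closure (Q '' (Submodule.span K
      (Set.range fun p : (A →L[K] K) × (A →L[K] K) => tD.tm p.1 p.2) : Set tD.T)) := by
    exact image_closure_subset_closure_image (f := Q)
      (s := (Submodule.span K
        (Set.range fun p : (A →L[K] K) × (A →L[K] K) => tD.tm p.1 p.2) : Set tD.T))
      Q.continuous ⟨z, hzcl, rfl⟩
  refine closure_mono ?_ h1
  rintro _ ⟨w, hw, rfl⟩
  refine Submodule.span_induction (p := fun w _ => FiniteDimensional K (LinearMap.range (Q w : A →ₗ[K] A →L[K] K)))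
    ?_ ?_ ?_ ?_ hw
  · rintro _ ⟨⟨α, β⟩, rfl⟩
    have hr : LinearMap.range (Q (tD.tm α β) : A →ₗ[K] A →L[K] K) ≤ Submodule.span K {α} := by
      rintro _ ⟨a, rfl⟩
      have : Q (tD.tm α β) a = β a • α := by
        ext x
        simp [hQapp, hP, mul_comm]
      rw [ContinuousLinearMap.coe_coe, this]
      exact Submodule.smul_mem _ _ (Submodule.mem_span_singleton_self α)
    exact Submodule.finiteDimensional_of_le hr
  · have : LinearMap.range (Q (0 : tD.T) : A →ₗ[K] A →L[K] K) = ⊥ := by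
      simp only [map_zero, ContinuousLinearMap.coe_zero]; exact LinearMap.range_zero
    show FiniteDimensional K (LinearMap.range (Q (0 : tD.T) : A →ₗ[K] A →L[K] K))
    rw [this]; infer_instance
  · intro x y _ _ hx hy
    have hr : LinearMap.range (Q (x + y) : A →ₗ[K] A →L[K] K) ≤
        LinearMap.range (Q x : A →ₗ[K] A →L[K] K) ⊔ LinearMap.range (Q y : A →ₗ[K] A →L[K] K) := by
      rintro _ ⟨a, rfl⟩
      rw [map_add]
      exact Submodule.add_mem_sup ⟨a, rfl⟩ ⟨a, rfl⟩
    exact Submodule.finiteDimensional_of_le hr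
  · intro c x _ hx
    have hr : LinearMap.range (Q (c • x) : A →ₗ[K] A →L[K] K) ≤ LinearMap.range (Q x : A →ₗ[K] A →L[K] K) := by
      rintro _ ⟨a, rfl⟩
      rw [map_smul]
      exact Submodule.smul_mem _ _ ⟨a, rfl⟩
    exact Submodule.finiteDimensional_of_le hr
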